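/- Let μ_n(x) := min_{0 ≤ k ≤ n} ( |x|²/(2 t_k²) + t_k ), where t_k = kΔt for a fixed Δt > 0, with the convention |x|²/(2 t_0²) = 0 if x = 0 and +∞ if x ≠ 0. Then (μ_n) satisfies the recursion μ_{n+1}(x) = min( min_{v∈ℝⁿ}( φ⁰(x − t_{n+1}v, v) ) + t_{n+1}, min_{0≤k≤n}( min_{v∈ℝⁿ}( |v|²/2 + μ_{n−k}(x − t_k v) ) + t_k ) ), where φ⁰(y,v) = 0_{y=0} + |v|²/2 (the indicator 0_{y=0} being 0 if y = 0 and +∞ otherwise). -/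

import Mathlib

open scoped ENNReal Classical

/-- The discrete time grid `t_k = k Δt`. -/
noncomputable def tgrid (Δt : ℝ) (k : ℕ) : ℝ := k * Δt

/-- The parabola `|y|²/(2 t_k²)` with the convention that it is the indicator
`0_{y = 0}` when `t_k = 0`. -/
noncomputable def parab (n : ℕ) (Δt : ℝ) (k : ℕ) (y : EuclideanSpace ℝ (Fin n)) : ℝ≥0∞ :=
  if tgrid Δt k = 0 then (if y = 0 then (0:ℝ≥0∞) else ⊤)
  else ENNReal.ofReal (‖y‖ ^ 2 / (2 * (tgrid Δt k) ^ 2))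

/-- `μ_N(x) = min_{0 ≤ k ≤ N} ( |x|²/(2 t_k²) + t_k )`. -/
noncomputable def muN (n : ℕ) (Δt : ℝ) (N : ℕ) (x : EuclideanSpace ℝ (Fin n)) : ℝ≥0∞ :=
  ⨅ k ∈ Finset.range (N + 1), (parab n Δt k x + ENNReal.ofReal (tgrid Δt k))

/-- `φ⁰(y,v) = 0_{y=0} + |v|²/2`. -/
noncomputable def phi0 (n : ℕ) (y v : EuclideanSpace ℝ (Fin n)) : ℝ≥0∞ :=
  (if y = 0 then (0:ℝ≥0∞) else ⊤) + ENNReal.ofReal (‖v‖ ^ 2 / 2)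

lemma tgrid_nonneg {Δt : ℝ} (hΔ : 0 < Δt) (k : ℕ) : 0 ≤ tgrid Δt k := by
  unfold tgrid; positivity

lemma tgrid_pos {Δt : ℝ} (hΔ : 0 < Δt) {k : ℕ} (hk : 0 < k) : 0 < tgrid Δt k := by
  unfold tgrid
  have : (0:ℝ) < k := by exact_mod_cast hk
  positivity

lemma tgrid_add (Δt : ℝ) (j k : ℕ) : tgrid Δt (j + k) = tgrid Δt j + tgrid Δt k := by
  unfold tgrid; push_cast; ring

lemma real_ineq {a b : ℝ} (ha : 0 < a) (hb : 0 < b) (p q : ℝ) :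
    (p + b * q) ^ 2 / (2 * (a + b) ^ 2) ≤ p ^ 2 / (2 * a ^ 2) + q ^ 2 / 2 := by
  have h1 : (0:ℝ) < 2 * (a + b) ^ 2 := by positivity
  have h2 : (0:ℝ) < 2 * a ^ 2 := by positivity
  have heq : p ^ 2 / (2 * a ^ 2) + q ^ 2 / 2 = (p ^ 2 + a ^ 2 * q ^ 2) / (2 * a ^ 2) := by
    field_simp
  rw [heq, div_le_div_iff₀ h1 h2]
  nlinarith [sq_nonneg (b * p - a ^ 2 * q), sq_nonneg (p - a * q), mul_pos ha hb,
    sq_nonneg (p + a * q), mul_pos (mul_pos ha hb) (mul_pos ha hb)]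

/-- Key pointwise inequality: `parab_{j+k}(x) ≤ |v|²/2 + parab_j(x - t_k v)`. -/
lemma key (n : ℕ) {Δt : ℝ} (hΔ : 0 < Δt) (j k : ℕ) (v x : EuclideanSpace ℝ (Fin n)) :
    parab n Δt (j + k) x ≤
      ENNReal.ofReal (‖v‖ ^ 2 / 2) + parab n Δt j (x - tgrid Δt k • v) := by
  set y := x - tgrid Δt k • v with hy
  have hx : x = y + tgrid Δt k • v := by rw [hy]; abel
  rcases Nat.eq_zero_or_pos k with hk | hk
  · subst hk
    have h0 : tgrid Δt 0 = 0 := by simp [tgrid]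
    have : y = x := by rw [hy, h0]; simp
    rw [this]
    simpa using le_add_self
  · have htk : 0 < tgrid Δt k := tgrid_pos hΔ hk
    rcases Nat.eq_zero_or_pos j with hj | hj
    · subst hj
      by_cases hy0 : y = 0
      · have hxv : x = tgrid Δt k • v := by rw [hx, hy0]; simp
        have h0 : tgrid Δt 0 = 0 := by simp [tgrid]
        rw [parab, parab, if_neg (show tgrid Δt (0 + k) ≠ 0 by rw [Nat.zero_add]; exact htk.ne'),
          if_pos h0, if_pos hy0, add_zero, Nat.zero_add]
        apply ENNReal.ofReal_le_ofReal
        rw [hxv, norm_smul, Real.norm_eq_abs, abs_of_pos htk]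
        apply le_of_eq
        field_simp
      · have hT : parab n Δt 0 y = ⊤ := by
          rw [parab, if_pos (by simp [tgrid]), if_neg hy0]
        rw [hT]
        simp
    · have htj : 0 < tgrid Δt j := tgrid_pos hΔ hj
      have htjk : 0 < tgrid Δt (j + k) := tgrid_pos hΔ (by omega)
      rw [parab, parab, if_neg htjk.ne', if_neg htj.ne', ← ENNReal.ofReal_add (by positivity)
        (by positivity)]
      apply ENNReal.ofReal_le_ofReal
      have hnorm : ‖x‖ ≤ ‖y‖ + tgrid Δt k * ‖v‖ := by
        rw [hx]
        calc ‖y + tgrid Δt k • v‖ ≤ ‖y‖ + ‖tgrid Δt k • v‖ := norm_add_le _ _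
          _ = ‖y‖ + tgrid Δt k * ‖v‖ := by
              rw [norm_smul, Real.norm_eq_abs, abs_of_pos htk]
      rw [tgrid_add]
      calc ‖x‖ ^ 2 / (2 * (tgrid Δt j + tgrid Δt k) ^ 2)
          ≤ (‖y‖ + tgrid Δt k * ‖v‖) ^ 2 / (2 * (tgrid Δt j + tgrid Δt k) ^ 2) := by gcongr
        _ ≤ ‖y‖ ^ 2 / (2 * (tgrid Δt j) ^ 2) + ‖v‖ ^ 2 / 2 :=
            real_ineq htj htk _ _
        _ = ‖v‖ ^ 2 / 2 + ‖y‖ ^ 2 / (2 * (tgrid Δt j) ^ 2) := add_comm _ _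

theorem stmt_5 (n : ℕ) (Δt : ℝ) (hΔ : 0 < Δt) (N : ℕ) (x : EuclideanSpace ℝ (Fin n)) :
    muN n Δt (N + 1) x =
      min
        ((⨅ v : EuclideanSpace ℝ (Fin n), phi0 n (x - tgrid Δt (N + 1) • v) v)
          + ENNReal.ofReal (tgrid Δt (N + 1)))
        (⨅ k ∈ Finset.range (N + 1),
          ((⨅ v : EuclideanSpace ℝ (Fin n),
              (ENNReal.ofReal (‖v‖ ^ 2 / 2) + muN n Δt (N - k) (x - tgrid Δt k • v)))
            + ENNReal.ofReal (tgrid Δt k))) := by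
  have ht : 0 < tgrid Δt (N + 1) := tgrid_pos hΔ (Nat.succ_pos N)
  have hA : (⨅ v : EuclideanSpace ℝ (Fin n), phi0 n (x - tgrid Δt (N + 1) • v) v)
      = parab n Δt (N + 1) x := by
    apply le_antisymm
    · apply iInf_le_of_le ((tgrid Δt (N + 1))⁻¹ • x)
      have h0 : x - tgrid Δt (N + 1) • (tgrid Δt (N + 1))⁻¹ • x = 0 := by
        rw [smul_smul, mul_inv_cancel₀ ht.ne', one_smul, sub_self]
      rw [phi0, if_pos h0, zero_add, parab, if_neg ht.ne']
      refine ENNReal.ofReal_le_ofReal (le_of_eq ?_)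
      rw [norm_smul, Real.norm_eq_abs, abs_inv, abs_of_pos ht]
      field_simp
    · refine le_iInf fun v => ?_
      by_cases hv : x - tgrid Δt (N + 1) • v = 0
      · have hxv : x = tgrid Δt (N + 1) • v := by rwa [sub_eq_zero] at hv
        rw [phi0, if_pos hv, zero_add, parab, if_neg ht.ne']
        refine ENNReal.ofReal_le_ofReal (le_of_eq ?_)
        rw [hxv, norm_smul, Real.norm_eq_abs, abs_of_pos ht]
        field_simp
      · rw [phi0, if_neg hv]
        simp
  have hB : (⨅ k ∈ Finset.range (N + 1),
        ((⨅ v : EuclideanSpace ℝ (Fin n),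
            (ENNReal.ofReal (‖v‖ ^ 2 / 2) + muN n Δt (N - k) (x - tgrid Δt k • v)))
          + ENNReal.ofReal (tgrid Δt k))) = muN n Δt N x := by
    have h0 : tgrid Δt 0 = 0 := by simp [tgrid]
    apply le_antisymm
    · refine le_trans (iInf₂_le 0 (Finset.mem_range.mpr (Nat.succ_pos N))) ?_
      rw [h0]
      simp only [ENNReal.ofReal_zero, add_zero, zero_smul, sub_zero, Nat.sub_zero]
      refine le_trans (iInf_le _ 0) ?_
      simp
    · refine le_iInf₂ fun k hk => ?_
      have hkN : k ≤ N := Nat.lt_succ_iff.mp (Finset.mem_range.mp hk)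
      rw [ENNReal.iInf_add]
      refine le_iInf fun v => ?_
      rw [show muN n Δt (N - k) (x - tgrid Δt k • v)
        = ⨅ j ∈ Finset.range (N - k + 1),
            (parab n Δt j (x - tgrid Δt k • v) + ENNReal.ofReal (tgrid Δt j)) from rfl]
      simp only [ENNReal.add_iInf, ENNReal.iInf_add]
      refine le_iInf₂ fun j hj => ?_
      have hjk : j + k ∈ Finset.range (N + 1) := by
        simp only [Finset.mem_range] at hj ⊢
        omega
      calc muN n Δt N x ≤ parab n Δt (j + k) x + ENNReal.ofReal (tgrid Δt (j + k)) :=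
            iInf₂_le (j + k) hjk
        _ ≤ (ENNReal.ofReal (‖v‖ ^ 2 / 2) + parab n Δt j (x - tgrid Δt k • v))
              + ENNReal.ofReal (tgrid Δt (j + k)) :=
            add_le_add_left (key n hΔ j k v x) _
        _ = ENNReal.ofReal (‖v‖ ^ 2 / 2)
              + (parab n Δt j (x - tgrid Δt k • v) + ENNReal.ofReal (tgrid Δt j))
              + ENNReal.ofReal (tgrid Δt k) := by
            rw [tgrid_add, ENNReal.ofReal_add (tgrid_nonneg hΔ j) (tgrid_nonneg hΔ k)]
            ring
  rw [hA, hB, muN, Finset.range_add_one, Finset.iInf_insert]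
  rfl
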